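/- Let G be a group, O(G) its commutative Hopf algebra of functions, and J a Hopf 2-cocycle for O(G). For each g ∈ G (viewed as a character of O(G)), the map f ↦ Σ g(f₁) f₂ is an algebra automorphism of the right-twisted algebra O(G)_J whose multiplication is mⱼ(a ⊗ b) = Σ a₁b₁ J(a₂,b₂). -/
import Mathlib


open TensorProduct

noncomputable section

/-- Convolution product of two `ℂ`-valued functionals on a `ℂ`-coalgebra. -/
def conv {C : Type} [AddCommGroup C] [Module ℂ C] [Coalgebra ℂ C]
    (f g : C →ₗ[ℂ] ℂ) : C →ₗ[ℂ] ℂ :=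
  LinearMap.mul' ℂ ℂ ∘ₗ TensorProduct.map f g ∘ₗ Coalgebra.comul

variable {H : Type} [CommRing H] [HopfAlgebra ℂ H]

/-- `a ⊗ b ⊗ c ↦ Σ J(a₁b₁ ⊗ c) J(a₂ ⊗ b₂)`. -/
def cocycleLHS (J : H ⊗[ℂ] H →ₗ[ℂ] ℂ) : (H ⊗[ℂ] H) ⊗[ℂ] H →ₗ[ℂ] ℂ :=
  conv (J ∘ₗ TensorProduct.map (LinearMap.mul' ℂ H) LinearMap.id)
    (LinearMap.mul' ℂ ℂ ∘ₗ TensorProduct.map J Coalgebra.counit)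

/-- `a ⊗ b ⊗ c ↦ Σ J(a ⊗ b₁c₁) J(b₂ ⊗ c₂)`. -/
def cocycleRHS (J : H ⊗[ℂ] H →ₗ[ℂ] ℂ) : (H ⊗[ℂ] H) ⊗[ℂ] H →ₗ[ℂ] ℂ :=
  conv (J ∘ₗ TensorProduct.map LinearMap.id (LinearMap.mul' ℂ H)
        ∘ₗ (TensorProduct.assoc ℂ H H H).toLinearMap)
    (LinearMap.mul' ℂ ℂ ∘ₗ TensorProduct.map Coalgebra.counit J
        ∘ₗ (TensorProduct.assoc ℂ H H H).toLinearMap)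

/-- A Hopf 2-cocycle for `H`: a convolution-invertible functional on `H ⊗ H` satisfying
`Σ J(a₁b₁, c) J(a₂, b₂) = Σ J(a, b₁c₁) J(b₂, c₂)` and `J(a,1) = ε(a) = J(1,a)`. -/
structure IsHopf2Cocycle (J : H ⊗[ℂ] H →ₗ[ℂ] ℂ) : Prop where
  invertible : ∃ J' : H ⊗[ℂ] H →ₗ[ℂ] ℂ,
    conv J J' = Coalgebra.counit ∧ conv J' J = Coalgebra.counit
  cocycle : cocycleLHS J = cocycleRHS J
  norm_right : ∀ a : H, J (a ⊗ₜ[ℂ] (1 : H)) = Coalgebra.counit a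
  norm_left : ∀ a : H, J ((1 : H) ⊗ₜ[ℂ] a) = Coalgebra.counit a


/-- The right-twisted product `a ⊗ b ↦ Σ a₁b₁ ψ(a₂ ⊗ b₂)` of `O(G)_J`. -/
def twR (ψ : H ⊗[ℂ] H →ₗ[ℂ] ℂ) : H ⊗[ℂ] H →ₗ[ℂ] H :=
  (TensorProduct.rid ℂ H).toLinearMap
    ∘ₗ TensorProduct.map (LinearMap.mul' ℂ H) ψ ∘ₗ Coalgebra.comul

/-- The left winding endomorphism `f ↦ Σ g(f₁) f₂` attached to a character `g`. -/
def winding (g : H →ₐ[ℂ] ℂ) : H →ₗ[ℂ] H :=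
  (TensorProduct.lid ℂ H).toLinearMap
    ∘ₗ TensorProduct.map g.toLinearMap LinearMap.id ∘ₗ Coalgebra.comul

/-! ### Auxiliary machinery -/

open Coalgebra

/-- The winding endomorphism attached to an arbitrary functional. -/
def Wl (φ : H →ₗ[ℂ] ℂ) : H →ₗ[ℂ] H :=
  (TensorProduct.lid ℂ H).toLinearMap
    ∘ₗ TensorProduct.map φ LinearMap.id ∘ₗ Coalgebra.comul

lemma winding_eq_Wl (g : H →ₐ[ℂ] ℂ) : winding g = Wl g.toLinearMap := rfl

lemma Wl_apply_of (φ : H →ₗ[ℂ] ℂ) {z : H} {ι : Type*} {s : Finset ι} {p q : ι → H}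
    (h : Coalgebra.comul (R := ℂ) z = ∑ i ∈ s, p i ⊗ₜ[ℂ] q i) :
    Wl φ z = ∑ i ∈ s, φ (p i) • q i := by
  simp [Wl, h, map_sum]

lemma Wl_apply (φ : H →ₗ[ℂ] ℂ) (a : H) :
    Wl φ a = ∑ i ∈ (ℛ ℂ a).index, φ ((ℛ ℂ a).left i) • (ℛ ℂ a).right i :=
  Wl_apply_of φ (ℛ ℂ a).eq.symm

lemma conv_apply_of (f g : H →ₗ[ℂ] ℂ) {z : H} {ι : Type*} {s : Finset ι} {p q : ι → H}
    (h : Coalgebra.comul (R := ℂ) z = ∑ i ∈ s, p i ⊗ₜ[ℂ] q i) :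
    conv f g z = ∑ i ∈ s, f (p i) * g (q i) := by
  simp [conv, h, map_sum]

lemma conv_apply (f g : H →ₗ[ℂ] ℂ) (a : H) :
    conv f g a = ∑ i ∈ (ℛ ℂ a).index, f ((ℛ ℂ a).left i) * g ((ℛ ℂ a).right i) :=
  conv_apply_of f g (ℛ ℂ a).eq.symm

lemma comul_Wl (φ : H →ₗ[ℂ] ℂ) (a : H) :
    Coalgebra.comul (R := ℂ) (Wl φ a)
      = ∑ i ∈ (ℛ ℂ a).index, Wl φ ((ℛ ℂ a).left i) ⊗ₜ[ℂ] (ℛ ℂ a).right i := by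
  set r := ℛ ℂ a with hr
  have h := Coalgebra.sum_tmul_tmul_eq r (fun i => ℛ ℂ (r.left i)) (fun i => ℛ ℂ (r.right i))
  have h2 := congrArg (TensorProduct.lift ((LinearMap.lsmul ℂ (H ⊗[ℂ] H)) ∘ₗ φ)) h
  simp only [map_sum, TensorProduct.lift.tmul, LinearMap.comp_apply,
    LinearMap.lsmul_apply] at h2
  calc Coalgebra.comul (R := ℂ) (Wl φ a)
      = ∑ i ∈ r.index, φ (r.left i) • Coalgebra.comul (R := ℂ) (r.right i) := by
        rw [Wl_apply, ← hr]; simp [map_sum]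
    _ = ∑ i ∈ r.index, ∑ j ∈ (ℛ ℂ (r.right i)).index,
          φ (r.left i) • ((ℛ ℂ (r.right i)).left j ⊗ₜ[ℂ] (ℛ ℂ (r.right i)).right j) := by
        refine Finset.sum_congr rfl fun i _ => ?_
        rw [← (ℛ ℂ (r.right i)).eq, Finset.smul_sum]
    _ = ∑ i ∈ r.index, ∑ j ∈ (ℛ ℂ (r.left i)).index,
          φ ((ℛ ℂ (r.left i)).left j) • ((ℛ ℂ (r.left i)).right j ⊗ₜ[ℂ] r.right i) := h2.symm
    _ = ∑ i ∈ r.index, Wl φ (r.left i) ⊗ₜ[ℂ] r.right i := by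
        refine Finset.sum_congr rfl fun i _ => ?_
        rw [Wl_apply, TensorProduct.sum_tmul]
        exact Finset.sum_congr rfl fun j _ => by rw [TensorProduct.smul_tmul']

lemma apply_Wl (φ ψ : H →ₗ[ℂ] ℂ) (x : H) : φ (Wl ψ x) = conv ψ φ x := by
  rw [Wl_apply, conv_apply, map_sum]
  exact Finset.sum_congr rfl fun i _ => by simp [smul_eq_mul]

lemma Wl_Wl (φ ψ : H →ₗ[ℂ] ℂ) (a : H) : Wl φ (Wl ψ a) = Wl (conv ψ φ) a := by
  rw [Wl_apply_of φ (comul_Wl ψ a), Wl_apply]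
  exact Finset.sum_congr rfl fun i _ => by rw [apply_Wl]

lemma Wl_counit (a : H) : Wl (Coalgebra.counit (R := ℂ)) a = a := by
  rw [Wl_apply]
  have h := congrArg (TensorProduct.lid ℂ H) (Coalgebra.sum_counit_tmul_eq (ℛ ℂ a))
  simp only [map_sum, TensorProduct.lid_tmul, one_smul] at h
  exact h

lemma twR_apply_of (J : H ⊗[ℂ] H →ₗ[ℂ] ℂ) {u v : H} {ι κ : Type*}
    {s : Finset ι} {t : Finset κ} {p q : ι → H} {p' q' : κ → H}
    (hu : Coalgebra.comul (R := ℂ) u = ∑ i ∈ s, p i ⊗ₜ[ℂ] q i)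
    (hv : Coalgebra.comul (R := ℂ) v = ∑ j ∈ t, p' j ⊗ₜ[ℂ] q' j) :
    twR J (u ⊗ₜ[ℂ] v) = ∑ i ∈ s, ∑ j ∈ t, J (q i ⊗ₜ[ℂ] q' j) • (p i * p' j) := by
  have hc : Coalgebra.comul (R := ℂ) (u ⊗ₜ[ℂ] v)
      = TensorProduct.tensorTensorTensorComm ℂ H H H H
          (TensorProduct.map Coalgebra.comul Coalgebra.comul (u ⊗ₜ[ℂ] v)) := rfl
  rw [Finset.sum_comm]
  simp [twR, hc, hu, hv, TensorProduct.sum_tmul, TensorProduct.tmul_sum, map_sum,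
    mul_comm]

lemma comul_winding (g : H →ₐ[ℂ] ℂ) (a : H) :
    Coalgebra.comul (R := ℂ) (winding g a)
      = ∑ i ∈ (ℛ ℂ a).index, winding g ((ℛ ℂ a).left i) ⊗ₜ[ℂ] (ℛ ℂ a).right i := by
  rw [winding_eq_Wl]
  exact comul_Wl _ a

lemma winding_mul (g : H →ₐ[ℂ] ℂ) (a b : H) :
    winding g (a * b) = winding g a * winding g b := by
  rw [winding_eq_Wl]
  have hc : Coalgebra.comul (R := ℂ) (a * b)
      = ∑ ij ∈ (ℛ ℂ a).index ×ˢ (ℛ ℂ b).index,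
          ((ℛ ℂ a).left ij.1 * (ℛ ℂ b).left ij.2) ⊗ₜ[ℂ]
            ((ℛ ℂ a).right ij.1 * (ℛ ℂ b).right ij.2) := by
    rw [Bialgebra.comul_mul, ← (ℛ ℂ a).eq, ← (ℛ ℂ b).eq, Finset.sum_mul_sum,
      ← Finset.sum_product']
    exact Finset.sum_congr rfl fun ij _ => by
      rw [Algebra.TensorProduct.tmul_mul_tmul]
  rw [Wl_apply_of _ hc, Wl_apply g.toLinearMap a, Wl_apply g.toLinearMap b,
    Finset.sum_mul_sum, ← Finset.sum_product']
  exact Finset.sum_congr rfl fun ij _ => by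
    simp only [AlgHom.toLinearMap_apply, map_mul, Algebra.smul_def]
    ring

theorem winding_automorphism_of_right_twist (g : H →ₐ[ℂ] ℂ)
    (J : H ⊗[ℂ] H →ₗ[ℂ] ℂ) (hJ : IsHopf2Cocycle J) :
    Function.Bijective (winding g)
    ∧ winding g (1 : H) = 1
    ∧ ∀ a b : H, winding g (twR J (a ⊗ₜ[ℂ] b))
        = twR J (winding g a ⊗ₜ[ℂ] winding g b) := by
  set φS : H →ₗ[ℂ] ℂ := g.toLinearMap ∘ₗ HopfAlgebra.antipode (R := ℂ) with hφS
  have hconv1 : conv g.toLinearMap φS = Coalgebra.counit := by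
    ext x
    rw [conv_apply]
    have h2 : ∑ i ∈ (ℛ ℂ x).index, g.toLinearMap ((ℛ ℂ x).left i) * φS ((ℛ ℂ x).right i)
        = g (∑ i ∈ (ℛ ℂ x).index,
            (ℛ ℂ x).left i * HopfAlgebra.antipode (R := ℂ) ((ℛ ℂ x).right i)) := by
      rw [map_sum]
      exact Finset.sum_congr rfl fun i _ => by rw [map_mul]; rfl
    rw [h2, HopfAlgebra.sum_mul_antipode_eq_algebraMap_counit, g.commutes]
    simp
  have hconv2 : conv φS g.toLinearMap = Coalgebra.counit := by
    ext x
    rw [conv_apply]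
    have h2 : ∑ i ∈ (ℛ ℂ x).index, φS ((ℛ ℂ x).left i) * g.toLinearMap ((ℛ ℂ x).right i)
        = g (∑ i ∈ (ℛ ℂ x).index,
            HopfAlgebra.antipode (R := ℂ) ((ℛ ℂ x).left i) * (ℛ ℂ x).right i) := by
      rw [map_sum]
      exact Finset.sum_congr rfl fun i _ => by rw [map_mul]; rfl
    rw [h2, HopfAlgebra.sum_antipode_mul_eq_algebraMap_counit, g.commutes]
    simp
  have hli : Function.LeftInverse (Wl φS) (winding g) := fun a => by
    rw [winding_eq_Wl, Wl_Wl, hconv1, Wl_counit]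
  have hri : Function.RightInverse (Wl φS) (winding g) := fun a => by
    rw [winding_eq_Wl, Wl_Wl, hconv2, Wl_counit]
  refine ⟨⟨hli.injective, hri.surjective⟩, ?_, ?_⟩
  · simp [winding, Bialgebra.comul_one, Algebra.TensorProduct.one_def]
  · intro a b
    rw [twR_apply_of J (ℛ ℂ a).eq.symm (ℛ ℂ b).eq.symm, map_sum,
      twR_apply_of J (comul_winding g a) (comul_winding g b)]
    refine Finset.sum_congr rfl fun i _ => ?_
    rw [map_sum]
    refine Finset.sum_congr rfl fun j _ => ?_
    rw [map_smul, winding_mul]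

end
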